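/- Let G be an acyclic directed mixed graph on a finite vertex set V, let x, y ∈ V and Z ⊆ V ∖ {x, y}. If some path π between x and y in G is not blocked by Z (i.e., π m-connects x and y given Z), then every vertex on π lies in an_G({x, y} ∪ Z). -/

import Mathlib

open Finset

open scoped Classical

variable {V : Type} [Fintype V] [DecidableEq V]

/-- An acyclic directed mixed graph (ADMG): directed edges `dir` and a symmetric
irreflexive set of bidirected edges `bi`, with no directed cycle. -/
structure ADMG (V : Type) [Fintype V] [DecidableEq V] where
  dir : V → V → Prop
  bi : V → V → Prop
  bi_symm : ∀ {v w}, bi v w → bi w v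
  bi_irrefl : ∀ v, ¬ bi v v
  acyclic : ∀ v, ¬ Relation.TransGen dir v v

namespace ADMG

/-- Ancestors of (members of) `A`: vertices `w` with `w = a` or a directed path `w → ⋯ → a`
for some `a ∈ A`. -/
noncomputable def anc (G : ADMG V) (A : Finset V) : Finset V :=
  univ.filter fun w => ∃ a ∈ A, Relation.ReflTransGen G.dir w a

/-- Descendants of (members of) `A`. -/
noncomputable def dec (G : ADMG V) (A : Finset V) : Finset V :=
  univ.filter fun w => ∃ a ∈ A, Relation.ReflTransGen G.dir a w

/-- Parents of (members of) `A`. -/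
noncomputable def pa (G : ADMG V) (A : Finset V) : Finset V :=
  univ.filter fun w => ∃ a ∈ A, G.dir w a

/-- `barren_G(U)`: members of `U` with no non-trivial descendant in `U`. -/
noncomputable def barren (G : ADMG V) (U : Finset V) : Finset V :=
  U.filter fun v => G.dec {v} ∩ U = {v}

/-- `U` is barren if `barren_G(U) = U`. -/
def IsBarren (G : ADMG V) (U : Finset V) : Prop := G.barren U = U

/-- One bidirected step inside the induced subgraph `G_S`. -/
def biStep (G : ADMG V) (S : Finset V) (u w : V) : Prop :=
  u ∈ S ∧ w ∈ S ∧ G.bi u w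

/-- District of (members of) `A` in the induced subgraph `G_S`: vertices joined to a member
of `A` by a (possibly empty) bidirected path within `S`. -/
noncomputable def disIn (G : ADMG V) (S A : Finset V) : Finset V :=
  univ.filter fun w => ∃ a ∈ A, a ∈ S ∧ w ∈ S ∧ Relation.ReflTransGen (G.biStep S) a w

/-- District in the whole graph. -/
noncomputable def dis (G : ADMG V) (A : Finset V) : Finset V := G.disIn univ A

/-- A head: a nonempty barren set connected by bidirected paths in `G_{an_G(H)}`. -/
def IsHead (G : ADMG V) (H : Finset V) : Prop :=
  H.Nonempty ∧ G.IsBarren H ∧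
    ∀ a ∈ H, ∀ b ∈ H, Relation.ReflTransGen (G.biStep (G.anc H)) a b

/-- The tail of a head: `tail_G(H) = pa_G(D) ∪ (D ∖ H)` where `D = dis_{G_{an(H)}}(H)`. -/
noncomputable def tail (G : ADMG V) (H : Finset V) : Finset V :=
  G.pa (G.disIn (G.anc H) H) ∪ (G.disIn (G.anc H) H \ H)

end ADMG

/-- `Gbar` is a head-preserving completion of `G`: a complete supergraph (on the same
vertices) in which every head of `G` is still a head. -/
def IsHPC (G Gbar : ADMG V) : Prop :=
  (∀ v w, G.dir v w → Gbar.dir v w) ∧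
  (∀ v w, G.bi v w → Gbar.bi v w) ∧
  (∀ v w : V, v ≠ w → Gbar.dir v w ∨ Gbar.dir w v ∨ Gbar.bi v w) ∧
  (∀ H : Finset V, G.IsHead H → Gbar.IsHead H)

/-- Type of an edge on a path, read from left to right:
`u → w`, `u ← w`, or `u ↔ w`. -/
inductive EdgeType : Type
  | toRight
  | toLeft
  | biE

/-- The edge of the given type is present in `G` between `u` (left) and `w` (right). -/
def edgeOK (G : ADMG V) : EdgeType → V → V → Prop
  | .toRight, u, w => G.dir u w
  | .toLeft,  u, w => G.dir w u
  | .biE,     u, w => G.bi u w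

/-- The edge has an arrowhead at its right endpoint. -/
def arrowAtRight : EdgeType → Prop
  | .toRight => True
  | .toLeft  => False
  | .biE     => True

/-- The edge has an arrowhead at its left endpoint. -/
def arrowAtLeft : EdgeType → Prop
  | .toRight => False
  | .toLeft  => True
  | .biE     => True

/-- A path from `x` to `y` in the mixed graph `G`: distinct vertices `f 0, …, f n`
joined by edges of the recorded types. -/
structure GPath (G : ADMG V) (x y : V) where
  n : ℕ
  f : Fin (n + 1) → V
  inj : Function.Injective f
  first : f 0 = x
  last : f (Fin.last n) = y
  e : Fin n → EdgeType
  ok : ∀ i : Fin n, edgeOK G (e i) (f i.castSucc) (f i.succ)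

/-- The interior vertex `f (i+1)` is a collider on the path: both incident edges
have an arrowhead at it. -/
def GPath.colliderAt {G : ADMG V} {x y : V} (w : GPath G x y)
    (i : ℕ) (h : i + 1 < w.n) : Prop :=
  arrowAtRight (w.e ⟨i, by omega⟩) ∧ arrowAtLeft (w.e ⟨i + 1, h⟩)

/-- The path is blocked by `C`: some interior non-collider is in `C`, or some interior
collider is outside `an_G(C)`. -/
def GPath.Blocked {G : ADMG V} {x y : V} (w : GPath G x y) (C : Finset V) : Prop :=
  ∃ (i : ℕ) (h : i + 1 < w.n),
    (¬ w.colliderAt i h ∧ w.f ⟨i + 1, by omega⟩ ∈ C) ∨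
    (w.colliderAt i h ∧ w.f ⟨i + 1, by omega⟩ ∉ G.anc C)

/-- m-separation of `A` and `B` given `C` in `G`. -/
def MSep (G : ADMG V) (A B C : Finset V) : Prop :=
  ∀ a ∈ A, ∀ b ∈ B, ∀ w : GPath G a b, w.Blocked C

/-- if a path between `x` and `y` is not blocked by `Z ⊆ V ∖ {x, y}`
(i.e. it m-connects `x` and `y` given `Z`), then every vertex on it lies in
`an_G({x, y} ∪ Z)`. -/
lemma mem_anc_iff {G : ADMG V} {A : Finset V} {v : V} :
    v ∈ G.anc A ↔ ∃ a ∈ A, Relation.ReflTransGen G.dir v a := by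
  simp [ADMG.anc]

lemma subset_anc {G : ADMG V} {A : Finset V} : A ⊆ G.anc A := by
  intro v hv; exact mem_anc_iff.2 ⟨v, hv, Relation.ReflTransGen.refl⟩

lemma anc_mono {G : ADMG V} {A B : Finset V} (h : A ⊆ B) : G.anc A ⊆ G.anc B := by
  intro v hv
  obtain ⟨a, ha, hr⟩ := mem_anc_iff.1 hv
  exact mem_anc_iff.2 ⟨a, h ha, hr⟩

lemma dir_anc {G : ADMG V} {A : Finset V} {u v : V} (hd : G.dir u v)
    (hv : v ∈ G.anc A) : u ∈ G.anc A := by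
  obtain ⟨a, ha, hr⟩ := mem_anc_iff.1 hv
  exact mem_anc_iff.2 ⟨a, ha, Relation.ReflTransGen.head hd hr⟩

theorem mConnecting_path_in_ancestors (G : ADMG V) (x y : V) (Z : Finset V)
    (hx : x ∉ Z) (hy : y ∉ Z) (w : GPath G x y) (hnb : ¬ w.Blocked Z) :
    ∀ i : Fin (w.n + 1), w.f i ∈ G.anc ({x, y} ∪ Z) := by
  set S : Finset V := {x, y} ∪ Z with hS
  -- consequences of not blocked
  have hcol : ∀ (i : ℕ) (h : i + 1 < w.n), w.colliderAt i h →
      w.f ⟨i + 1, by omega⟩ ∈ G.anc Z := by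
    intro i h hc
    by_contra hmem
    exact hnb ⟨i, h, Or.inr ⟨hc, hmem⟩⟩
  have hxS : x ∈ S := by simp [hS]
  have hyS : y ∈ S := by simp [hS]
  have hZS : G.anc Z ⊆ G.anc S := anc_mono (by intro v hv; simp [hS, hv])
  -- rightward lemma
  have rightStep : ∀ k (i : Fin w.n), w.n - i.val = k → ¬ arrowAtLeft (w.e i) →
      w.f i.castSucc ∈ G.anc S := by
    intro k
    induction k using Nat.strong_induction_on with
    | _ k ih =>
      intro i hk hL
      have hok := w.ok i
      have hEi : w.e i = EdgeType.toRight := by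
        cases h : w.e i <;> simp [h, arrowAtLeft] at hL ⊢
      have hdir : G.dir (w.f i.castSucc) (w.f i.succ) := by
        rw [hEi] at hok; exact hok
      refine dir_anc hdir ?_
      by_cases hlast : i.val + 1 = w.n
      · have : i.succ = Fin.last w.n := by ext; simp [hlast]
        rw [this, w.last]; exact subset_anc hyS
      · have hlt : i.val + 1 < w.n := by omega
        by_cases hc : w.colliderAt i.val (by omega)
        · have := hZS (hcol i.val (by omega) hc)
          convert this using 2
          ext; simp
        · have hi' : (⟨i.val, by omega⟩ : Fin w.n) = i := rfl
          have hAR : arrowAtRight (w.e ⟨i.val, by omega⟩) := by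
            rw [hi', hEi]; trivial
          have hnAL : ¬ arrowAtLeft (w.e ⟨i.val + 1, hlt⟩) := fun h => hc ⟨hAR, h⟩
          have hrec := ih (w.n - (i.val + 1)) (by omega) ⟨i.val + 1, hlt⟩ rfl hnAL
          convert hrec using 2
          ext; simp
  -- leftward lemma
  have leftStep : ∀ k (i : Fin w.n), i.val = k → ¬ arrowAtRight (w.e i) →
      w.f i.succ ∈ G.anc S := by
    intro k
    induction k using Nat.strong_induction_on with
    | _ k ih =>
      intro i hk hR
      have hok := w.ok i
      have hEi : w.e i = EdgeType.toLeft := by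
        cases h : w.e i <;> simp [h, arrowAtRight] at hR ⊢
      have hdir : G.dir (w.f i.succ) (w.f i.castSucc) := by
        rw [hEi] at hok; exact hok
      refine dir_anc hdir ?_
      by_cases h0 : i.val = 0
      · have : i.castSucc = (0 : Fin (w.n + 1)) := by ext; simp [h0]
        rw [this, w.first]; exact subset_anc hxS
      · have hlt : (i.val - 1) + 1 < w.n := by omega
        have hfe : w.f (⟨(i.val - 1) + 1, by omega⟩ : Fin (w.n + 1)) = w.f i.castSucc := by
          congr 1; ext; simp; omega
        by_cases hc : w.colliderAt (i.val - 1) hlt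
        · have := hZS (hcol (i.val - 1) hlt hc)
          rw [hfe] at this; exact this
        · have hAL : arrowAtLeft (w.e ⟨(i.val - 1) + 1, hlt⟩) := by
            have : (⟨(i.val - 1) + 1, hlt⟩ : Fin w.n) = i := by ext; simp; omega
            rw [this, hEi]; trivial
          have hnAR : ¬ arrowAtRight (w.e ⟨i.val - 1, by omega⟩) := fun h => hc ⟨h, hAL⟩
          have hrec := ih (i.val - 1) (by omega) ⟨i.val - 1, by omega⟩ rfl hnAR
          have : (⟨i.val - 1, by omega⟩ : Fin w.n).succ = i.castSucc := by
            ext; simp; omega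
          rwa [this] at hrec
  -- main argument
  intro j
  by_cases hj0 : j.val = 0
  · have : j = 0 := by ext; simp [hj0]
    rw [this, w.first]; exact subset_anc hxS
  by_cases hjn : j.val = w.n
  · have : j = Fin.last w.n := by ext; simp [hjn]
    rw [this, w.last]; exact subset_anc hyS
  · have hlt : (j.val - 1) + 1 < w.n := by omega
    have hfe : w.f (⟨(j.val - 1) + 1, by omega⟩ : Fin (w.n + 1)) = w.f j := by
      congr 1; ext; simp; omega
    by_cases hc : w.colliderAt (j.val - 1) hlt
    · have := hZS (hcol (j.val - 1) hlt hc)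
      rwa [hfe] at this
    · by_cases hAR : arrowAtRight (w.e ⟨j.val - 1, by omega⟩)
      · have hnAL : ¬ arrowAtLeft (w.e ⟨(j.val - 1) + 1, hlt⟩) := fun h => hc ⟨hAR, h⟩
        have := rightStep (w.n - ((j.val - 1) + 1)) ⟨(j.val - 1) + 1, hlt⟩ rfl hnAL
        have heq : (⟨(j.val - 1) + 1, hlt⟩ : Fin w.n).castSucc = j := by
          ext; simp; omega
        rwa [heq] at this
      · have := leftStep (j.val - 1) ⟨j.val - 1, by omega⟩ rfl hAR
        have heq : (⟨j.val - 1, by omega⟩ : Fin w.n).succ = j := by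
          ext; simp; omega
        rwa [heq] at this
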